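/- Let m, n be natural numbers and let a : Fin m → ℕ and b : Fin n → ℕ. Consider the set P of real m × n matrices C with all entries nonnegative, whose i-th row sum equals a(i) for every i and whose j-th column sum equals b(j) for every j. Then every extreme point of the convex set P is a matrix all of whose entries are (nonnegative) integers. -/

import Mathlib

open Finset

private lemma isNatR_sum {α : Type*} (s : Finset α) (f : α → ℝ)
    (h : ∀ j ∈ s, ∃ k : ℕ, f j = k) : ∃ K : ℕ, ∑ j ∈ s, f j = K := by
  classical
  choose g hg using h
  refine ⟨∑ j ∈ s.attach, g j j.2, ?_⟩
  rw [← Finset.sum_attach s f]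
  push_cast
  exact Finset.sum_congr rfl fun j _ => hg j j.2

private lemma exists_other {n : ℕ} (f : Fin n → ℝ) (t : ℕ)
    (hf : ∀ j, 0 ≤ f j) (hsum : ∑ j, f j = t) (j0 : Fin n)
    (h0 : ¬ ∃ k : ℕ, f j0 = k) : ∃ j1, j1 ≠ j0 ∧ ¬ ∃ k : ℕ, f j1 = k := by
  classical
  by_contra hcon
  push_neg at hcon
  obtain ⟨N, hN⟩ := isNatR_sum ((Finset.univ : Finset (Fin n)).erase j0) f
    (fun j hj => hcon j (Finset.ne_of_mem_erase hj))
  have hsplit : f j0 + ∑ j ∈ Finset.univ.erase j0, f j = t := by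
    rw [Finset.add_sum_erase _ _ (Finset.mem_univ j0)]; exact hsum
  have hval : f j0 = (t : ℝ) - N := by rw [hN] at hsplit; linarith
  have hNle : N ≤ t := by
    have : (N : ℝ) ≤ t := by linarith [hf j0]
    exact_mod_cast this
  exact h0 ⟨t - N, by rw [hval]; push_cast [Nat.cast_sub hNle]; ring⟩

/-- The key linear-algebra step: a nonzero "circulation" supported on `S`. -/
private lemma exists_circulation {m n : ℕ} (S : Finset (Fin m × Fin n)) (hSne : S.Nonempty)
    (R : Finset (Fin m)) (hR : R = S.image Prod.fst)
    (Cs : Finset (Fin n)) (hCs : Cs = S.image Prod.snd)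
    (hcardR : 2 * R.card ≤ S.card) (hcardC : 2 * Cs.card ≤ S.card) :
    ∃ x : {p // p ∈ S} → ℝ, x ≠ 0 ∧
      (∀ i ∈ R, ∑ p ∈ S.attach.filter (fun p => p.1.1 = i), x p = 0) ∧
      (∀ j ∈ Cs, ∑ p ∈ S.attach.filter (fun p => p.1.2 = j), x p = 0) := by
  classical
  set ρ : ({p // p ∈ S} → ℝ) →ₗ[ℝ] ({i // i ∈ R} → ℝ) × ({j // j ∈ Cs} → ℝ) :=
    { toFun := fun x =>
        (fun i => ∑ p ∈ S.attach.filter (fun p => p.1.1 = i.1), x p,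
         fun j => ∑ p ∈ S.attach.filter (fun p => p.1.2 = j.1), x p),
      map_add' := by
        intro x y
        refine Prod.ext ?_ ?_ <;> funext z <;>
          simp [Finset.sum_add_distrib]
      map_smul' := by
        intro c x
        refine Prod.ext ?_ ?_ <;> funext z <;>
          simp [Finset.mul_sum] } with hρ
  set ℓ : (({i // i ∈ R} → ℝ) × ({j // j ∈ Cs} → ℝ)) →ₗ[ℝ] ℝ :=
    { toFun := fun uv => (∑ i, uv.1 i) - ∑ j, uv.2 j,
      map_add' := by intro x y; simp [Finset.sum_add_distrib]; ring
      map_smul' := by intro c x; simp [Finset.mul_sum, mul_sub] } with hℓ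
  have hmapsR : ∀ p : {p // p ∈ S}, p.1.1 ∈ R := fun p => by
    rw [hR]; exact Finset.mem_image_of_mem _ p.2
  have hmapsC : ∀ p : {p // p ∈ S}, p.1.2 ∈ Cs := fun p => by
    rw [hCs]; exact Finset.mem_image_of_mem _ p.2
  have hrange : LinearMap.range ρ ≤ LinearMap.ker ℓ := by
    rintro _ ⟨x, rfl⟩
    have key : ∀ (α : Type) [Fintype α] [DecidableEq α] (T : Finset α)
        (g : {p // p ∈ S} → α), (∀ p, g p ∈ T) →
        ∑ t ∈ T.attach, ∑ p ∈ S.attach.filter (fun p => g p = t.1), x p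
          = ∑ p ∈ S.attach, x p := by
      intro α _ _ T g hg
      rw [Finset.sum_attach T (fun t => ∑ p ∈ S.attach.filter (fun p => g p = t), x p)]
      exact Finset.sum_fiberwise_of_maps_to (fun p _ => hg p) x
    simp only [LinearMap.mem_ker, hℓ, hρ, LinearMap.coe_mk, AddHom.coe_mk]
    change (∑ i : {i // i ∈ R}, ∑ p ∈ S.attach.filter (fun p => p.1.1 = i.1), x p)
      - ∑ j : {j // j ∈ Cs}, ∑ p ∈ S.attach.filter (fun p => p.1.2 = j.1), x p = 0
    rw [Finset.univ_eq_attach, Finset.univ_eq_attach,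
      key (Fin m) R (fun p => p.1.1) hmapsR, key (Fin n) Cs (fun p => p.1.2) hmapsC, sub_self]
  obtain ⟨p0, hp0⟩ := hSne
  have hRne : R.Nonempty := ⟨p0.1, hR ▸ Finset.mem_image_of_mem _ hp0⟩
  have hCsne : Cs.Nonempty := ⟨p0.2, hCs ▸ Finset.mem_image_of_mem _ hp0⟩
  have hℓsurj : Function.Surjective ℓ := by
    intro r
    have hval : ℓ (fun _ => (1:ℝ), 0) = R.card := by
      simp [hℓ, Finset.card_univ, Fintype.card_coe]
    refine ⟨(r / R.card) • (fun _ => (1:ℝ), 0), ?_⟩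
    rw [map_smul, hval, smul_eq_mul]
    have : (R.card : ℝ) ≠ 0 := by
      exact_mod_cast Finset.card_ne_zero_of_mem hRne.choose_spec
    field_simp
  have hdim1 : Module.finrank ℝ (({i // i ∈ R} → ℝ) × ({j // j ∈ Cs} → ℝ))
      = R.card + Cs.card := by
    simp [Module.finrank_prod, Fintype.card_coe]
  have hrankℓ : Module.finrank ℝ (LinearMap.range ℓ) = 1 := by
    rw [LinearMap.range_eq_top.mpr hℓsurj]
    simp [finrank_top]
  have hkerℓ : Module.finrank ℝ (LinearMap.ker ℓ) + 1 = R.card + Cs.card := by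
    have := LinearMap.finrank_range_add_finrank_ker ℓ
    rw [hrankℓ, hdim1] at this
    omega
  have hrangeρ : Module.finrank ℝ (LinearMap.range ρ) ≤ Module.finrank ℝ (LinearMap.ker ℓ) :=
    Submodule.finrank_mono hrange
  have hdomρ : Module.finrank ℝ ({p // p ∈ S} → ℝ) = S.card := by
    simp [Fintype.card_coe]
  have hrn := LinearMap.finrank_range_add_finrank_ker ρ
  rw [hdomρ] at hrn
  have hkerρpos : 0 < Module.finrank ℝ (LinearMap.ker ρ) := by
    have hR1 : 1 ≤ R.card := Finset.card_pos.mpr hRne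
    omega
  have hkerρne : LinearMap.ker ρ ≠ ⊥ := by
    intro h
    rw [h, finrank_bot] at hkerρpos
    omega
  obtain ⟨x, hxker, hxne⟩ := Submodule.ne_bot_iff _ |>.mp hkerρne
  refine ⟨x, hxne, ?_, ?_⟩
  · intro i hi
    have := congrFun (congrArg Prod.fst (LinearMap.mem_ker.mp hxker)) ⟨i, hi⟩
    simpa [hρ] using this
  · intro j hj
    have := congrFun (congrArg Prod.snd (LinearMap.mem_ker.mp hxker)) ⟨j, hj⟩
    simpa [hρ] using this


private lemma exists_perturbation {m n : ℕ} (S : Finset (Fin m × Fin n))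
    (x : {p // p ∈ S} → ℝ) (hxne : x ≠ 0)
    (hxrow : ∀ i ∈ S.image Prod.fst,
      ∑ p ∈ S.attach.filter (fun p => p.1.1 = i), x p = 0)
    (hxcol : ∀ j ∈ S.image Prod.snd,
      ∑ p ∈ S.attach.filter (fun p => p.1.2 = j), x p = 0) :
    ∃ D : Matrix (Fin m) (Fin n) ℝ, D ≠ 0 ∧ (∀ i j, (i, j) ∉ S → D i j = 0) ∧
      (∀ i, ∑ j, D i j = 0) ∧ (∀ j, ∑ i, D i j = 0) := by
  classical
  set y : Fin m × Fin n → ℝ := fun p => if h : p ∈ S then x ⟨p, h⟩ else 0 with hy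
  have hyval : ∀ p : {p // p ∈ S}, y p.1 = x p := fun p => dif_pos p.2
  have hyzero : ∀ p : Fin m × Fin n, p ∉ S → y p = 0 := fun p hp => dif_neg hp
  refine ⟨fun i j => y (i, j), ?_, ?_, ?_, ?_⟩
  case refine_2 => intro i j h; exact dif_neg h
  case refine_1 =>
    intro hzero
    obtain ⟨p, hp⟩ := Function.ne_iff.mp hxne
    have h0 : y ((p : Fin m × Fin n).1, (p : Fin m × Fin n).2) = 0 := by
      simpa using congrFun (congrFun hzero p.1.1) p.1.2
    rw [Prod.mk.eta, hyval p] at h0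
    exact absurd h0 (by simpa using hp)
  case refine_3 =>
    intro i
    show ∑ j, y (i, j) = 0
    by_cases hi : i ∈ S.image Prod.fst
    · have e1 : ∑ p ∈ S.attach.filter (fun p => p.1.1 = i), x p
          = ∑ p ∈ S.attach, (fun q : Fin m × Fin n => if q.1 = i then y q else 0) p.1 := by
        rw [Finset.sum_filter]
        refine Finset.sum_congr rfl fun p _ => ?_
        simp only [hyval]
      have e2 : ∑ p ∈ S.attach, (fun q : Fin m × Fin n => if q.1 = i then y q else 0) p.1
          = ∑ p ∈ S, if p.1 = i then y p else 0 :=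
        Finset.sum_attach S (fun q : Fin m × Fin n => if q.1 = i then y q else 0)
      have e3 : ∑ p ∈ S, (if p.1 = i then y p else 0)
          = ∑ p : Fin m × Fin n, (if p.1 = i then y p else 0) := by
        refine Finset.sum_subset (Finset.subset_univ S) fun p _ hpS => ?_
        rw [hyzero p hpS, ite_self]
      have e4 : ∑ p : Fin m × Fin n, (if p.1 = i then y p else 0) = ∑ j, y (i, j) := by
        rw [Fintype.sum_prod_type]
        have inner : ∀ i', ∑ j, (if i' = i then y (i', j) else 0)
            = if i' = i then ∑ j, y (i, j) else 0 := by
          intro i'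
          by_cases h : i' = i
          · subst h; simp
          · simp [h]
        rw [Finset.sum_congr rfl fun i' _ => inner i']
        simp
      have := hxrow i hi
      rw [e1, e2, e3, e4] at this
      exact this
    · refine Finset.sum_eq_zero fun j _ => ?_
      refine hyzero (i, j) fun hmem => hi ?_
      exact Finset.mem_image_of_mem _ hmem
  case refine_4 =>
    intro j
    show ∑ i, y (i, j) = 0
    by_cases hj : j ∈ S.image Prod.snd
    · have e1 : ∑ p ∈ S.attach.filter (fun p => p.1.2 = j), x p
          = ∑ p ∈ S.attach, (fun q : Fin m × Fin n => if q.2 = j then y q else 0) p.1 := by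
        rw [Finset.sum_filter]
        refine Finset.sum_congr rfl fun p _ => ?_
        simp only [hyval]
      have e2 : ∑ p ∈ S.attach, (fun q : Fin m × Fin n => if q.2 = j then y q else 0) p.1
          = ∑ p ∈ S, if p.2 = j then y p else 0 :=
        Finset.sum_attach S (fun q : Fin m × Fin n => if q.2 = j then y q else 0)
      have e3 : ∑ p ∈ S, (if p.2 = j then y p else 0)
          = ∑ p : Fin m × Fin n, (if p.2 = j then y p else 0) := by
        refine Finset.sum_subset (Finset.subset_univ S) fun p _ hpS => ?_
        rw [hyzero p hpS, ite_self]
      have e4 : ∑ p : Fin m × Fin n, (if p.2 = j then y p else 0) = ∑ i, y (i, j) := by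
        rw [Fintype.sum_prod_type_right]
        have inner : ∀ j', ∑ i, (if j' = j then y (i, j') else 0)
            = if j' = j then ∑ i, y (i, j) else 0 := by
          intro j'
          by_cases h : j' = j
          · subst h; simp
          · simp [h]
        rw [Finset.sum_congr rfl fun j' _ => inner j']
        simp
      have := hxcol j hj
      rw [e1, e2, e3, e4] at this
      exact this
    · refine Finset.sum_eq_zero fun i _ => ?_
      refine hyzero (i, j) fun hmem => hj ?_
      exact Finset.mem_image_of_mem _ hmem

/-- Integrality of the transportation polytope: every extreme point of the set of
nonnegative real `m × n` matrices with prescribed natural-number row sums `a` and column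
sums `b` has natural-number entries. -/
theorem transportation_polytope_extremePoints_integral
    (m n : ℕ) (a : Fin m → ℕ) (b : Fin n → ℕ) :
    ∀ C ∈ Set.extremePoints ℝ
      {C : Matrix (Fin m) (Fin n) ℝ |
        (∀ i j, 0 ≤ C i j) ∧ (∀ i, ∑ j, C i j = (a i : ℝ)) ∧
        (∀ j, ∑ i, C i j = (b j : ℝ))},
      ∀ i j, ∃ k : ℕ, C i j = (k : ℝ) := by
  classical
  rintro C hC i0 j0
  obtain ⟨⟨hpos, hrow, hcol⟩, hext⟩ := hC
  by_contra hfrac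
  set S : Finset (Fin m × Fin n) :=
    Finset.univ.filter (fun p => ¬ ∃ k : ℕ, C p.1 p.2 = k) with hS
  have hmemS : ∀ p, p ∈ S ↔ ¬ ∃ k : ℕ, C p.1 p.2 = k := by
    intro p; simp [hS]
  have hSne : S.Nonempty := ⟨(i0, j0), (hmemS _).2 hfrac⟩
  set R : Finset (Fin m) := S.image Prod.fst with hR
  set Cs : Finset (Fin n) := S.image Prod.snd with hCs
  -- each nonempty row fiber has at least two elements
  have hrow2 : ∀ i ∈ R, 2 ≤ (S.filter (fun p => p.1 = i)).card := by
    intro i hi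
    obtain ⟨p, hpS, hpi⟩ := Finset.mem_image.mp hi
    have hfraci : ¬ ∃ k : ℕ, C i p.2 = k := by
      have := (hmemS p).mp hpS; rwa [hpi] at this
    obtain ⟨j1, hj1ne, hj1⟩ := exists_other (C i) (a i) (hpos i) (hrow i) p.2 hfraci
    rw [show (2:ℕ) = 1 + 1 from rfl, Nat.add_one_le_iff, Finset.one_lt_card]
    refine ⟨(i, p.2), ?_, (i, j1), ?_, ?_⟩
    · simp [Finset.mem_filter, hmemS, hfraci]
    · simp [Finset.mem_filter, hmemS, hj1]
    · simp [hj1ne.symm]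
  have hcol2 : ∀ j ∈ Cs, 2 ≤ (S.filter (fun p => p.2 = j)).card := by
    intro j hj
    obtain ⟨p, hpS, hpj⟩ := Finset.mem_image.mp hj
    have hfracj : ¬ ∃ k : ℕ, C p.1 j = k := by
      have := (hmemS p).mp hpS; rwa [hpj] at this
    obtain ⟨i1, hi1ne, hi1⟩ := exists_other (fun i => C i j) (b j)
      (fun i => hpos i j) (hcol j) p.1 hfracj
    rw [show (2:ℕ) = 1 + 1 from rfl, Nat.add_one_le_iff, Finset.one_lt_card]
    refine ⟨(p.1, j), ?_, (i1, j), ?_, ?_⟩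
    · simp [Finset.mem_filter, hmemS, hfracj]
    · simp [Finset.mem_filter, hmemS, hi1]
    · simp [hi1ne.symm]
  have hcardR : 2 * R.card ≤ S.card := by
    have hfib : S.card = ∑ i ∈ R, (S.filter (fun p => p.1 = i)).card :=
      Finset.card_eq_sum_card_fiberwise (fun p hp => Finset.mem_image_of_mem _ hp)
    calc 2 * R.card = ∑ _i ∈ R, 2 := by simp [mul_comm]
    _ ≤ ∑ i ∈ R, (S.filter (fun p => p.1 = i)).card := Finset.sum_le_sum hrow2
    _ = S.card := hfib.symm
  have hcardC : 2 * Cs.card ≤ S.card := by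
    have hfib : S.card = ∑ j ∈ Cs, (S.filter (fun p => p.2 = j)).card :=
      Finset.card_eq_sum_card_fiberwise (fun p hp => Finset.mem_image_of_mem _ hp)
    calc 2 * Cs.card = ∑ _j ∈ Cs, 2 := by simp [mul_comm]
    _ ≤ ∑ j ∈ Cs, (S.filter (fun p => p.2 = j)).card := Finset.sum_le_sum hcol2
    _ = S.card := hfib.symm
  obtain ⟨x, hxne, hxrow, hxcol⟩ := exists_circulation S hSne R hR Cs hCs hcardR hcardC
  obtain ⟨D, hDne, hDsupp, hDrow, hDcol⟩ :=
    exists_perturbation S x hxne (hR ▸ hxrow) (hCs ▸ hxcol)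
  -- entries of C on S are positive
  have hCpos : ∀ p ∈ S, 0 < C p.1 p.2 := by
    intro p hp
    rcases lt_or_eq_of_le (hpos p.1 p.2) with h | h
    · exact h
    · exact absurd ⟨0, by simp [← h]⟩ ((hmemS p).mp hp)
  set c : ℝ := S.inf' hSne (fun p => C p.1 p.2) with hc
  have hcpos : 0 < c := by
    rw [hc, Finset.lt_inf'_iff]
    exact fun p hp => hCpos p hp
  set M : ℝ := S.sup' hSne (fun p => |D p.1 p.2|) with hM
  have hM0 : 0 ≤ M :=
    le_trans (abs_nonneg _) (Finset.le_sup' (fun p => |D p.1 p.2|) hSne.choose_spec)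
  set ε : ℝ := c / (M + 1) with hε
  have hεpos : 0 < ε := div_pos hcpos (by linarith)
  have hεM : ε * (M + 1) = c := div_mul_cancel₀ c (by linarith)
  have hbound : ∀ i j, ε * |D i j| < c := by
    intro i j
    by_cases h : (i, j) ∈ S
    · have h1 : |D i j| ≤ M := Finset.le_sup' (fun p => |D p.1 p.2|) h
      nlinarith
    · rw [hDsupp i j h]
      simpa using hcpos
  have hcle : ∀ p ∈ S, c ≤ C p.1 p.2 := fun p hp => Finset.inf'_le _ hp
  have hentry : ∀ (s : ℝ), |s| ≤ 1 → ∀ i j, 0 ≤ C i j + (s * ε) * D i j := by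
    intro s hs i j
    by_cases h : (i, j) ∈ S
    · have h1 := hbound i j
      have h2 := hcle (i, j) h
      have h3 : |s * ε * D i j| ≤ ε * |D i j| := by
        rw [abs_mul, abs_mul, abs_of_pos hεpos]
        have h4 := abs_nonneg (D i j)
        calc |s| * ε * |D i j| ≤ 1 * ε * |D i j| :=
              mul_le_mul_of_nonneg_right
                (mul_le_mul_of_nonneg_right hs hεpos.le) h4
          _ = ε * |D i j| := by ring
      have h5 := (abs_le.mp h3).1
      have h2' : c ≤ C i j := h2
      linarith [h1, h2', h5]
    · rw [hDsupp i j h]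
      simpa using hpos i j
  have hmem : ∀ (s : ℝ), |s| ≤ 1 → (C + (s * ε) • D) ∈
      {C : Matrix (Fin m) (Fin n) ℝ |
        (∀ i j, 0 ≤ C i j) ∧ (∀ i, ∑ j, C i j = (a i : ℝ)) ∧
        (∀ j, ∑ i, C i j = (b j : ℝ))} := by
    intro s hs
    refine ⟨fun i j => ?_, fun i => ?_, fun j => ?_⟩
    · simpa [Matrix.add_apply, Matrix.smul_apply, smul_eq_mul] using hentry s hs i j
    · simp only [Matrix.add_apply, Matrix.smul_apply, smul_eq_mul]
      rw [Finset.sum_add_distrib, ← Finset.mul_sum, hDrow i, hrow i, mul_zero, add_zero]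
    · simp only [Matrix.add_apply, Matrix.smul_apply, smul_eq_mul]
      rw [Finset.sum_add_distrib, ← Finset.mul_sum, hDcol j, hcol j, mul_zero, add_zero]
  have h1 := hmem 1 (by norm_num)
  have h2 := hmem (-1) (by norm_num)
  have hseg : C ∈ openSegment ℝ (C + ((1 : ℝ) * ε) • D) (C + ((-1 : ℝ) * ε) • D) := by
    refine ⟨1/2, 1/2, by norm_num, by norm_num, by norm_num, ?_⟩
    module
  obtain heq := hext h1 h2 hseg
  have hD0 : D = 0 := by
    have h6 : ((1 : ℝ) * ε) • D = 0 := by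
      have := congrArg (fun X => X - C) heq
      simpa [add_sub_cancel_left] using this
    rcases smul_eq_zero.mp h6 with h7 | h7
    · exact absurd h7 (by positivity)
    · exact h7
  exact hDne hD0
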